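/- Let a > 0 be real and let b ∈ ℂ with |b| < 1 and |a·b| < 1. Let s and r be the principal square roots of 1 - b² and 1 - a²b² respectively (both lie in the open right half-plane, so s and r are well-defined and nonzero). Set x₊ := b/s + a·b/r, y₋ := 1/s - 1/r, and M_s'(b) := (i/2)·[[x₊, y₋], [-y₋, -x₊]] ∈ M₂(ℂ). Then det M_s'(b) = 0 if and only if b = 0. -/

import Mathlib

open Complex

/-- The matrix `M_s'(b) = (i/2)·[[x₊, y₋],[-y₋, -x₊]]` with
`x₊ = b/s + ab/r` and `y₋ = 1/s - 1/r`. -/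
noncomputable def Msp (a : ℝ) (b s r : ℂ) : Matrix (Fin 2) (Fin 2) ℂ :=
  (Complex.I / 2) •
    !![b / s + (a : ℂ) * b / r, 1 / s - 1 / r;
       -(1 / s - 1 / r), -(b / s + (a : ℂ) * b / r)]

/-- for `a > 0`, `|b| < 1`, `|ab| < 1`, with `s`, `r` the principal
square roots of `1 - b²` and `1 - a²b²` (the unique square roots with positive
real part), `det M_s'(b) = 0` if and only if `b = 0`. -/
theorem statement15 (a : ℝ) (ha : 0 < a) (b : ℂ)
    (hb : ‖b‖ < 1) (hab : ‖(a : ℂ) * b‖ < 1)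
    (s r : ℂ)
    (hs2 : s ^ 2 = 1 - b ^ 2) (hsre : 0 < s.re)
    (hr2 : r ^ 2 = 1 - (a : ℂ) ^ 2 * b ^ 2) (hrre : 0 < r.re) :
    (Msp a b s r).det = 0 ↔ b = 0 := by
  have hs0 : s ≠ 0 := fun h => by simp [h] at hsre
  have hr0 : r ≠ 0 := fun h => by simp [h] at hrre
  have h1 : (Msp a b s r).det
      = ((b / s + (a : ℂ) * b / r) ^ 2 - (1 / s - 1 / r) ^ 2) / 4 := by
    simp only [Msp, Matrix.det_fin_two_of, Matrix.smul_of, Matrix.smul_cons,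
      Matrix.smul_empty, smul_eq_mul]
    linear_combination (-((b / s + (a : ℂ) * b / r) ^ 2 - (1 / s - 1 / r) ^ 2) / 4) *
      Complex.I_sq
  have h2 : ((b / s + (a : ℂ) * b / r) ^ 2 - (1 / s - 1 / r) ^ 2)
      = 2 * (((a : ℂ) * b ^ 2 + 1) - s * r) / (s * r) := by
    field_simp
    ring_nf
    linear_combination (1 - (a:ℂ)^2*b^2) * hs2 + (b^2 - 1 + 2*s^2) * hr2
  have h2sr : (4 : ℂ) ≠ 0 := by norm_num
  have hdet : (Msp a b s r).det = (((a : ℂ) * b ^ 2 + 1) - s * r) / (2 * (s * r)) := by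
    rw [h1, h2]
    field_simp
    ring
  rw [hdet, div_eq_zero_iff]
  constructor
  · rintro (h | h)
    · have hbz : b ^ 2 * (1 + (a : ℂ)) ^ 2 = 0 := by
        linear_combination (s * r + (a : ℂ) * b ^ 2 + 1) * h + r ^ 2 * hs2 +
          (1 - b ^ 2) * hr2
      have ha0 : (1 + (a : ℂ)) ≠ 0 := by
        intro h'
        have := congrArg Complex.re h'
        simp at this
        linarith
      rcases mul_eq_zero.mp hbz with h' | h'
      · exact pow_eq_zero_iff (by norm_num) |>.mp h'
      · exact absurd (pow_eq_zero_iff (by norm_num) |>.mp h') ha0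
    · exact absurd h (by simp [hs0, hr0])
  · intro hb0
    subst hb0
    have hs1 : s = 1 := by
      have h' : (s - 1) * (s + 1) = 0 := by linear_combination hs2
      rcases mul_eq_zero.mp h' with h | h
      · exact sub_eq_zero.mp h
      · exfalso
        have : s = -1 := by linear_combination h
        rw [this] at hsre; norm_num at hsre
    have hr1 : r = 1 := by
      have h' : (r - 1) * (r + 1) = 0 := by linear_combination hr2
      rcases mul_eq_zero.mp h' with h | h
      · exact sub_eq_zero.mp h
      · exfalso
        have : r = -1 := by linear_combination h
        rw [this] at hrre; norm_num at hrre
    left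
    rw [hs1, hr1]; ring
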